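/- Fix an integer k ≥ 0 and let g_k : [0,∞) → (0,∞) be continuous on [0,∞) and differentiable on (0,∞). Define h_k : [0,∞) → (0,∞) by the finite continued fraction h_k(x) = x + 1/(x + 2/(⋯ + k/g_k(x))); formally, b_k(x) = g_k(x), b_{j-1}(x) = x + j/b_j(x) for j = k, …, 1, and h_k(x) = b_0(x) (with h_0 = g_0). Let Δ_k(x) = φ(x)/h_k(x) − (1 − Φ(x)). Suppose h_k(0) = √(2/π), and suppose there exists x_k > 0 such that for all x > 0 the sign of g_k(x)² − x·g_k(x) − k − g_k'(x) equals the sign of x_k − x. Then Δ_k > 0 on (0,∞) if k is even, and Δ_k < 0 on (0,∞) if k is odd. -/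

import Mathlib

open MeasureTheory Real Set Filter Topology

/-- Standard Gaussian density. -/
noncomputable def gaussPdf (x : ℝ) : ℝ := Real.exp (-x ^ 2 / 2) / Real.sqrt (2 * Real.pi)

/-- Standard Gaussian distribution function. -/
noncomputable def gaussCdf (x : ℝ) : ℝ := ∫ t in Set.Iic x, gaussPdf t

/-- Finite continued fraction `hcf k g x = x + 1/(x + 2/(⋯ + k/(g x)))`,
with `hcf 0 g = g`. -/
noncomputable def hcf : ℕ → (ℝ → ℝ) → ℝ → ℝ
  | 0, g => g
  | (k + 1), g => hcf k (fun x => x + ((k : ℝ) + 1) / g x)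

lemma gaussPdf_pos (x : ℝ) : 0 < gaussPdf x :=
  div_pos (Real.exp_pos _) (Real.sqrt_pos.2 (by positivity))

lemma continuous_gaussPdf : Continuous gaussPdf := by
  unfold gaussPdf; fun_prop

lemma integrable_gaussPdf : Integrable gaussPdf := by
  have : Integrable (fun x : ℝ => Real.exp (-(1/2) * x ^ 2)) :=
    integrable_exp_neg_mul_sq (by norm_num)
  have h := this.div_const (Real.sqrt (2 * Real.pi))
  refine h.congr (by filter_upwards with x; unfold gaussPdf; ring_nf)

lemma integral_gaussPdf : ∫ x, gaussPdf x = 1 := by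
  have h := integral_gaussian (1/2)
  have h2 : ∫ x : ℝ, Real.exp (-(1/2) * x ^ 2) = Real.sqrt (2 * Real.pi) := by
    rw [h]; rw [show Real.pi / (1/2) = 2 * Real.pi by ring]
  unfold gaussPdf
  rw [integral_div]
  rw [show (fun x : ℝ => Real.exp (-x^2/2)) = fun x : ℝ => Real.exp (-(1/2) * x ^ 2) by
    funext x; ring_nf]
  rw [h2, div_self (by positivity)]

lemma tendsto_gaussCdf_atTop : Tendsto gaussCdf atTop (𝓝 1) := by
  have := (aecover_Iic (μ := volume) (l := atTop) (b := fun x : ℝ => x)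
    tendsto_id).integral_tendsto_of_countably_generated integrable_gaussPdf
  rwa [integral_gaussPdf] at this

lemma tendsto_gaussPdf_atTop : Tendsto gaussPdf atTop (𝓝 0) := by
  have h1 : Tendsto (fun y : ℝ => -y^2/2) atTop atBot := by
    have : Tendsto (fun y : ℝ => y^2) atTop atTop := tendsto_pow_atTop two_ne_zero
    exact ((tendsto_neg_atTop_atBot.comp this).atBot_div_const (by norm_num))
  have h2 : Tendsto (fun y : ℝ => Real.exp (-y^2/2)) atTop (𝓝 0) :=
    Real.tendsto_exp_atBot.comp h1
  have h3 := h2.div_const (Real.sqrt (2 * Real.pi))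
  rw [zero_div] at h3
  exact h3

lemma gaussCdf_zero : gaussCdf 0 = 1/2 := by
  have heven : ∀ x : ℝ, gaussPdf (-x) = gaussPdf x := by
    intro x; unfold gaussPdf; rw [neg_pow]; ring_nf
  have h1 : gaussCdf 0 = ∫ x in Ici (0:ℝ), gaussPdf x := by
    unfold gaussCdf
    calc ∫ t in Iic (0:ℝ), gaussPdf t = ∫ t in Iic (0:ℝ), gaussPdf (-t) := by
          simp [heven]
      _ = ∫ x in Ioi (-(0:ℝ)), gaussPdf x := integral_comp_neg_Iic 0 gaussPdf
      _ = ∫ x in Ici (0:ℝ), gaussPdf x := by rw [neg_zero, integral_Ici_eq_integral_Ioi]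
  have h2 : gaussCdf 0 + gaussCdf 0 = 1 := by
    nth_rewrite 2 [h1]
    rw [integral_Ici_eq_integral_Ioi]
    unfold gaussCdf
    rw [intervalIntegral.integral_Iic_add_Ioi integrable_gaussPdf.integrableOn
      integrable_gaussPdf.integrableOn, integral_gaussPdf]
  linarith

lemma gaussCdf_le_one (x : ℝ) : gaussCdf x ≤ 1 := by
  rw [← integral_gaussPdf]
  exact setIntegral_le_integral integrable_gaussPdf
    (by filter_upwards with t using le_of_lt (gaussPdf_pos t))

lemma hasDerivAt_gaussCdf (x : ℝ) : HasDerivAt gaussCdf (gaussPdf x) x := by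
  have key : ∀ y : ℝ, gaussCdf y = gaussCdf 0 + ∫ t in (0:ℝ)..y, gaussPdf t := by
    intro y
    have := intervalIntegral.integral_Iic_sub_Iic (f := gaussPdf) (μ := volume) (a := 0)
      (b := y) integrable_gaussPdf.integrableOn integrable_gaussPdf.integrableOn
    unfold gaussCdf
    rw [← this]; ring
  have hd : HasDerivAt (fun y => ∫ t in (0:ℝ)..y, gaussPdf t) (gaussPdf x) x :=
    intervalIntegral.integral_hasDerivAt_right
      (continuous_gaussPdf.intervalIntegrable _ _)
      (continuous_gaussPdf.aestronglyMeasurable.stronglyMeasurableAtFilter)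
      (continuous_gaussPdf.continuousAt)
  refine (hd.const_add (gaussCdf 0)).congr_of_eventuallyEq ?_
  filter_upwards with y using (key y)

lemma continuous_gaussCdf : Continuous gaussCdf :=
  Differentiable.continuous (fun x => (hasDerivAt_gaussCdf x).differentiableAt)

lemma hasDerivAt_gaussPdf (x : ℝ) : HasDerivAt gaussPdf (-x * gaussPdf x) x := by
  have h1 : HasDerivAt (fun y : ℝ => -y^2/2) (-x) x := by
    have : HasDerivAt (fun y : ℝ => y^2) (2*x) x := by simpa using (hasDerivAt_pow 2 x)
    have := (this.neg).div_const 2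
    exact this.congr_deriv (by ring)
  have h2 := (h1.exp).div_const (Real.sqrt (2 * Real.pi))
  exact h2.congr_deriv (by unfold gaussPdf; ring)

lemma hcf_pos : ∀ (k : ℕ) (g : ℝ → ℝ), (∀ x ≥ (0:ℝ), 0 < g x) → ∀ x ≥ (0:ℝ), 0 < hcf k g x
  | 0, g, hg => hg
  | (k+1), g, hg => by
    intro x hx
    have : ∀ y ≥ (0:ℝ), 0 < y + ((k:ℝ)+1) / g y := fun y hy =>
      add_pos_of_nonneg_of_pos hy (div_pos (by positivity) (hg y hy))
    exact hcf_pos k _ this x hx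

lemma hcf_gt : ∀ (k : ℕ) (g : ℝ → ℝ), (∀ x ≥ (0:ℝ), x < g x) → ∀ x ≥ (0:ℝ), x < hcf k g x
  | 0, g, hg => hg
  | (k+1), g, hg => by
    intro x hx
    have : ∀ y ≥ (0:ℝ), y < y + ((k:ℝ)+1) / g y := fun y hy => by
      have h0 : 0 < g y := lt_of_le_of_lt hy (hg y hy)
      have : 0 < ((k:ℝ)+1) / g y := div_pos (by positivity) h0
      linarith
    exact hcf_gt k _ this x hx

lemma hcf_gt' : ∀ (k : ℕ) (g : ℝ → ℝ), 0 < k → (∀ x ≥ (0:ℝ), 0 < g x) →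
    ∀ x ≥ (0:ℝ), x < hcf k g x
  | 0, _, h, _ => absurd h (lt_irrefl 0)
  | (k+1), g, _, hg => by
    have : ∀ y ≥ (0:ℝ), y < y + ((k:ℝ)+1) / g y := fun y hy => by
      have : 0 < ((k:ℝ)+1) / g y := div_pos (by positivity) (hg y hy)
      linarith
    exact hcf_gt k _ this

lemma hcf_continuousOn : ∀ (k : ℕ) (g : ℝ → ℝ), ContinuousOn g (Ici 0) →
    (∀ x ≥ (0:ℝ), 0 < g x) → ContinuousOn (hcf k g) (Ici 0)
  | 0, _, hg, _ => hg
  | (k+1), g, hg, hp => by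
    refine hcf_continuousOn k _ ?_ ?_
    · exact continuousOn_id.add (continuousOn_const.div hg (fun x hx => (hp x hx).ne'))
    · intro x hx
      exact add_pos_of_nonneg_of_pos hx (div_pos (by positivity) (hp x hx))

lemma hcf_key : ∀ (k : ℕ) (g g' : ℝ → ℝ), (∀ x ≥ (0:ℝ), 0 < g x) → ∀ x > (0:ℝ),
    HasDerivAt g (g' x) x → ∃ D c : ℝ, 0 < c ∧ HasDerivAt (hcf k g) D x ∧
      (hcf k g x)^2 - x * hcf k g x - D
        = (-1)^k * c * ((g x)^2 - x * g x - (k:ℝ) - g' x)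
  | 0, g, g', hp, x, hx, hd => ⟨g' x, 1, one_pos, hd, by simp only [hcf]; push_cast; ring⟩
  | (k+1), g, g', hp, x, hx, hd => by
    set G : ℝ → ℝ := fun y => y + ((k:ℝ)+1) / g y with hG
    set G' : ℝ → ℝ := fun y => 1 - ((k:ℝ)+1) * g' y / (g y)^2 with hG'
    have hgx : (0:ℝ) < g x := hp x (le_of_lt hx)
    have hGpos : ∀ y ≥ (0:ℝ), 0 < G y := fun y hy =>
      add_pos_of_nonneg_of_pos hy (div_pos (by positivity) (hp y hy))
    have hdG : HasDerivAt G (G' x) x := by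
      have h1 : HasDerivAt (fun y => ((k:ℝ)+1) / g y)
          ((0 * g x - ((k:ℝ)+1) * g' x) / (g x)^2) x :=
        (hasDerivAt_const x ((k:ℝ)+1)).div hd hgx.ne'
      have := (hasDerivAt_id x).add h1
      exact this.congr_deriv (by simp [hG']; ring)
    obtain ⟨D, c, hc, hD, hkey⟩ := hcf_key k G G' hGpos x hx hdG
    refine ⟨D, c * ((k:ℝ)+1) / (g x)^2, by positivity, hD, ?_⟩
    have h2 : (G x)^2 - x * G x - (k:ℝ) - G' x
        = -(((k:ℝ)+1) / (g x)^2) * ((g x)^2 - x * g x - ((k:ℝ)+1) - g' x) := by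
      simp only [hG, hG']
      field_simp
      ring
    show (hcf k G x)^2 - x * hcf k G x - D = _
    rw [hkey, h2]
    push_cast
    field_simp
    ring

lemma sign_pos_of {a : ℝ} (h : Real.sign a = 1) : 0 < a := by
  rcases lt_trichotomy a 0 with h' | h' | h'
  · rw [Real.sign_of_neg h'] at h; norm_num at h
  · rw [h', Real.sign_zero] at h; norm_num at h
  · exact h'

lemma sign_neg_of {a : ℝ} (h : Real.sign a = -1) : a < 0 := by
  rcases lt_trichotomy a 0 with h' | h' | h'
  · exact h'
  · rw [h', Real.sign_zero] at h; norm_num at h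
  · rw [Real.sign_of_pos h'] at h; norm_num at h

noncomputable def deltaFun (k : ℕ) (g : ℝ → ℝ) (x : ℝ) : ℝ :=
  gaussPdf x / hcf k g x - (1 - gaussCdf x)

lemma deltaFun_def (k : ℕ) (g : ℝ → ℝ) (x : ℝ) :
    deltaFun k g x = gaussPdf x / hcf k g x - (1 - gaussCdf x) := rfl

/-- Lemma 2 (criterion): if h_k(0) = √(2/π) and the sign of g² - x·g - k - g'
equals the sign of x_k - x for some x_k > 0, then the approximation error
Δ_k = φ/h_k - (1 - Φ) is positive on (0,∞) for even k and negative for odd k. -/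
theorem criterion_approx_error (k : ℕ) (g g' : ℝ → ℝ)
    (hcont : ContinuousOn g (Set.Ici (0 : ℝ)))
    (hpos : ∀ x ≥ (0 : ℝ), 0 < g x)
    (hderiv : ∀ x > (0 : ℝ), HasDerivAt g (g' x) x)
    (h0 : hcf k g 0 = Real.sqrt (2 / Real.pi))
    (xk : ℝ) (hxk : 0 < xk)
    (hsign : ∀ x > (0 : ℝ),
      Real.sign ((g x) ^ 2 - x * g x - (k : ℝ) - g' x) = Real.sign (xk - x)) :
    (Even k → ∀ x > (0 : ℝ), 0 < gaussPdf x / hcf k g x - (1 - gaussCdf x)) ∧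
    (Odd k → ∀ x > (0 : ℝ), gaussPdf x / hcf k g x - (1 - gaussCdf x) < 0) := by
  suffices hsuf : (Even k → ∀ x > (0:ℝ), 0 < deltaFun k g x) ∧
      (Odd k → ∀ x > (0:ℝ), deltaFun k g x < 0) by exact hsuf
  set Δ : ℝ → ℝ := deltaFun k g with hΔ
  set E : ℝ → ℝ := fun x => (g x)^2 - x * g x - (k:ℝ) - g' x with hE
  have hpos' : ∀ x ≥ (0:ℝ), 0 < hcf k g x := hcf_pos k g hpos
  -- Δ 0 = 0
  have hΔ0 : Δ 0 = 0 := by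
    have hpdf0 : gaussPdf 0 = 1 / Real.sqrt (2 * Real.pi) := by
      unfold gaussPdf; norm_num
    have hmul : Real.sqrt (2 * Real.pi) * Real.sqrt (2 / Real.pi) = 2 := by
      rw [← Real.sqrt_mul (by positivity)]
      rw [show (2 * Real.pi) * (2 / Real.pi) = 4 by field_simp; ring]
      rw [show (4:ℝ) = 2^2 by norm_num, Real.sqrt_sq (by norm_num)]
    rw [hΔ, deltaFun_def, h0, hpdf0, gaussCdf_zero, div_div, hmul]
    norm_num
  -- continuity of Δ on [0, ∞)
  have hΔcont : ContinuousOn Δ (Ici 0) := by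
    have hraw : ContinuousOn (fun x => gaussPdf x / hcf k g x - (1 - gaussCdf x)) (Ici 0) :=
      ((continuous_gaussPdf.continuousOn.div
      (hcf_continuousOn k g hcont hpos) (fun x hx => (hpos' x hx).ne')).sub
      ((continuous_const.sub continuous_gaussCdf).continuousOn))
    exact hraw.congr (fun x _ => deltaFun_def k g x)
  -- derivative of Δ
  have hΔderiv : ∀ x > (0:ℝ), ∃ c : ℝ, 0 < c ∧
      HasDerivAt Δ (gaussPdf x / (hcf k g x)^2 * ((-1:ℝ)^k * c * E x)) x := by
    intro x hx
    obtain ⟨D, c, hc, hD, hkey⟩ := hcf_key k g g' hpos x hx (hderiv x hx)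
    refine ⟨c, hc, ?_⟩
    have hhx : (0:ℝ) < hcf k g x := hpos' x hx.le
    have d1 : HasDerivAt (fun y => gaussPdf y / hcf k g y)
        ((-x * gaussPdf x * hcf k g x - gaussPdf x * D) / (hcf k g x)^2) x :=
      (hasDerivAt_gaussPdf x).div hD hhx.ne'
    have d2 : HasDerivAt (fun y => (1:ℝ) - gaussCdf y) (-gaussPdf x) x := by
      simpa using (hasDerivAt_gaussCdf x).const_sub 1
    have h3 := d1.sub d2
    have h4 : HasDerivAt Δ ((-x * gaussPdf x * hcf k g x - gaussPdf x * D) / (hcf k g x)^2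
        - -gaussPdf x) x := h3
    convert h4 using 1
    rw [← hkey]
    field_simp
    ring
  have hΔdiff : ∀ x > (0:ℝ), DifferentiableAt ℝ Δ x := fun x hx =>
    ((hΔderiv x hx).choose_spec.2).differentiableAt
  -- sign of E
  have hEpos : ∀ x, 0 < x → x < xk → 0 < E x := by
    intro x hx1 hx2
    have := hsign x hx1
    rw [Real.sign_of_pos (by linarith : (0:ℝ) < xk - x)] at this
    exact sign_pos_of this
  have hEneg : ∀ x, xk < x → E x < 0 := by
    intro x hx2
    have := hsign x (lt_trans hxk hx2)
    rw [Real.sign_of_neg (by linarith : xk - x < 0)] at this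
    exact sign_neg_of this
  constructor
  · -- even case
    intro hk x hx
    have hpow : ((-1:ℝ))^k = 1 := hk.neg_one_pow
    have mono1 : StrictMonoOn Δ (Icc 0 xk) := by
      refine strictMonoOn_of_deriv_pos (convex_Icc 0 xk)
        (hΔcont.mono (Icc_subset_Ici_self)) ?_
      rw [interior_Icc]
      intro y hy
      obtain ⟨c, hc, hD⟩ := hΔderiv y hy.1
      rw [hD.deriv, hpow]
      have := hEpos y hy.1 hy.2
      have := gaussPdf_pos y
      have := hpos' y hy.1.le
      positivity
    have anti1 : StrictAntiOn Δ (Ici xk) := by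
      refine strictAntiOn_of_deriv_neg (convex_Ici xk)
        (hΔcont.mono (Ici_subset_Ici.2 hxk.le)) ?_
      rw [interior_Ici]
      intro y hy
      have hy0 : (0:ℝ) < y := lt_trans hxk hy
      obtain ⟨c, hc, hD⟩ := hΔderiv y hy0
      rw [hD.deriv, hpow, one_mul]
      have hEy := hEneg y hy
      have h1 : 0 < gaussPdf y / (hcf k g y)^2 := by
        have := gaussPdf_pos y
        have := hpos' y hy0.le
        positivity
      exact mul_neg_of_pos_of_neg h1 (by nlinarith)
    rcases le_or_gt x xk with hxle | hxgt
    · have := mono1 (left_mem_Icc.2 hxk.le) ⟨hx.le, hxle⟩ hx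
      rw [hΔ0] at this
      exact this
    · -- x > xk: by contradiction
      by_contra hcon
      push_neg at hcon
      have hcon' : Δ x ≤ 0 := hcon
      have hΔx1 : Δ (x+1) < Δ x :=
        anti1 hxgt.le (by simp only [Set.mem_Ici]; linarith : x + 1 ∈ Ici xk) (by linarith)
      have hεpos : 0 < -Δ (x+1) := by linarith
      have hle : ∀ y, x + 1 ≤ y → Δ y ≤ Δ (x+1) := by
        intro y hy
        rcases eq_or_lt_of_le hy with rfl | hlt
        · exact le_refl _
        · exact le_of_lt (anti1 (by simp only [Set.mem_Ici]; linarith : x + 1 ∈ Ici xk)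
            (by simp only [Set.mem_Ici]; linarith : y ∈ Ici xk) hlt)
      have hev : ∀ᶠ y in atTop, gaussCdf y > 1 - (-Δ (x+1)) :=
        tendsto_gaussCdf_atTop.eventually (eventually_gt_nhds (by linarith))
      obtain ⟨y, hy1, hy2⟩ := (hev.and (eventually_ge_atTop (x+1))).exists
      have hΔy := hle y hy2
      have hdivpos : 0 < gaussPdf y / hcf k g y :=
        div_pos (gaussPdf_pos y) (hpos' y (by linarith))
      have heq : Δ y = gaussPdf y / hcf k g y - (1 - gaussCdf y) := deltaFun_def k g y
      linarith
  · -- odd case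
    intro hk x hx
    have hpow : ((-1:ℝ))^k = -1 := Odd.neg_one_pow hk
    have hkpos : 0 < k := hk.pos
    have hgt : ∀ y ≥ (0:ℝ), y < hcf k g y := hcf_gt' k g hkpos hpos
    have anti1 : StrictAntiOn Δ (Icc 0 xk) := by
      refine strictAntiOn_of_deriv_neg (convex_Icc 0 xk)
        (hΔcont.mono (Icc_subset_Ici_self)) ?_
      rw [interior_Icc]
      intro y hy
      obtain ⟨c, hc, hD⟩ := hΔderiv y hy.1
      rw [hD.deriv, hpow]
      have hEy := hEpos y hy.1 hy.2
      have h1 : 0 < gaussPdf y / (hcf k g y)^2 := by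
        have := gaussPdf_pos y
        have := hpos' y hy.1.le
        positivity
      exact mul_neg_of_pos_of_neg h1 (by nlinarith)
    have mono1 : StrictMonoOn Δ (Ici xk) := by
      refine strictMonoOn_of_deriv_pos (convex_Ici xk)
        (hΔcont.mono (Ici_subset_Ici.2 hxk.le)) ?_
      rw [interior_Ici]
      intro y hy
      have hy0 : (0:ℝ) < y := lt_trans hxk hy
      obtain ⟨c, hc, hD⟩ := hΔderiv y hy0
      rw [hD.deriv, hpow]
      have hEy := hEneg y hy
      have h1 : 0 < gaussPdf y / (hcf k g y)^2 := by
        have := gaussPdf_pos y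
        have := hpos' y hy0.le
        positivity
      have : 0 < (-1:ℝ) * c * E y := by nlinarith
      positivity
    rcases le_or_gt x xk with hxle | hxgt
    · have := anti1 (left_mem_Icc.2 hxk.le) ⟨hx.le, hxle⟩ hx
      rw [hΔ0] at this
      exact this
    · by_contra hcon
      push_neg at hcon
      have hΔx1 : Δ x < Δ (x+1) :=
        mono1 hxgt.le (by simp only [Set.mem_Ici]; linarith : x + 1 ∈ Ici xk) (by linarith)
      set ε : ℝ := Δ (x+1) with hε
      have hεpos : 0 < ε := by simp only [hε]; linarith
      have hle : ∀ y, x + 1 ≤ y → ε ≤ Δ y := by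
        intro y hy
        rcases eq_or_lt_of_le hy with rfl | hlt
        · simp [hε]
        · have : Δ (x+1) < Δ y := mono1 (by simp only [Set.mem_Ici]; linarith : x + 1 ∈ Ici xk)
            (by simp only [Set.mem_Ici]; linarith : y ∈ Ici xk) hlt
          linarith
      have hev : ∀ᶠ y in atTop, gaussPdf y < ε :=
        tendsto_gaussPdf_atTop.eventually (eventually_lt_nhds hεpos)
      obtain ⟨y, hy1, hy2⟩ := (hev.and ((eventually_ge_atTop (x+1)).and
        (eventually_ge_atTop (1:ℝ)))).exists
      obtain ⟨hy2, hy3⟩ := hy2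
      have hy0 : (0:ℝ) < y := by linarith
      have hhy : y < hcf k g y := hgt y hy0.le
      have hΔy := hle y hy2
      -- Δ y = φ/h - (1 - cdf) ≥ ε, and 1 - cdf ≥ 0, so φ/h ≥ ε
      have hcdf : gaussCdf y ≤ 1 := gaussCdf_le_one y
      have heq : Δ y = gaussPdf y / hcf k g y - (1 - gaussCdf y) := deltaFun_def k g y
      have hφh : Δ (x+1) ≤ gaussPdf y / hcf k g y := by linarith
      have hφhy : gaussPdf y / hcf k g y < gaussPdf y / y :=
        div_lt_div_of_pos_left (gaussPdf_pos y) hy0 hhy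
      have hφy : gaussPdf y / y ≤ gaussPdf y := by
        rw [div_le_iff₀ hy0]
        nlinarith [(gaussPdf_pos y).le]
      linarith
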